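/- For every positive integer b, the sum ∑_{d ∣ b} A(d) over the positive divisors d of b equals the number of pairs (a,c) ∈ ℤ² with a² + c² = 2b², and this in turn equals r₂(b²), the number of pairs (x,y) ∈ ℤ² with x² + y² = b². -/

import Mathlib

/-- `A n` is the number of pairs `(a, c) ∈ ℤ²` with `a² + c² = 2n²` and `gcd(a, c, n) = 1`. -/
noncomputable def A (n : ℕ) : ℕ :=
  Set.ncard {p : ℤ × ℤ | p.1 ^ 2 + p.2 ^ 2 = 2 * (n : ℤ) ^ 2 ∧
    Int.gcd (Int.gcd p.1 p.2) (n : ℤ) = 1}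

lemma le_sq_int (x : ℤ) : x ≤ x ^ 2 := by
  rcases le_or_gt x 0 with h1 | h1
  · exact h1.trans (sq_nonneg x)
  · have h2 : 1 ≤ x := h1
    nlinarith

lemma neg_le_sq_int (x : ℤ) : -x ≤ x ^ 2 := by
  have := le_sq_int (-x)
  nlinarith

lemma finite_sol (m : ℤ) : {p : ℤ × ℤ | p.1 ^ 2 + p.2 ^ 2 = m}.Finite := by
  apply Set.Finite.subset ((Set.finite_Icc (-m) m).prod (Set.finite_Icc (-m) m))
  rintro ⟨x, y⟩ h
  simp only [Set.mem_setOf_eq] at h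
  have h1 := le_sq_int x
  have h2 := neg_le_sq_int x
  have h3 := le_sq_int y
  have h4 := neg_le_sq_int y
  constructor <;> simp only [Set.mem_Icc] <;>
    constructor <;> nlinarith [sq_nonneg x, sq_nonneg y]

lemma gcd_scale (e d : ℕ) (a c : ℤ) (h : Int.gcd (Int.gcd a c) (d : ℤ) = 1) :
    Int.gcd (Int.gcd ((e : ℤ) * a) ((e : ℤ) * c)) ((e * d : ℕ) : ℤ) = e := by
  have h1 : Int.gcd ((e : ℤ) * a) ((e : ℤ) * c) = e * Int.gcd a c := by
    rw [Int.gcd_mul_left]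
    simp
  rw [Int.gcd_natCast_natCast] at h
  rw [h1, Int.gcd_natCast_natCast, Nat.gcd_mul_left, h, mul_one]

theorem stmt_6 (b : ℕ) (hb : 0 < b) :
    (∑ d ∈ b.divisors, A d)
        = Set.ncard {p : ℤ × ℤ | p.1 ^ 2 + p.2 ^ 2 = 2 * (b : ℤ) ^ 2} ∧
      Set.ncard {p : ℤ × ℤ | p.1 ^ 2 + p.2 ^ 2 = 2 * (b : ℤ) ^ 2}
        = Set.ncard {p : ℤ × ℤ | p.1 ^ 2 + p.2 ^ 2 = (b : ℤ) ^ 2} := by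
  constructor
  · -- Part 1: divisor sum
    have hT : {p : ℤ × ℤ | p.1 ^ 2 + p.2 ^ 2 = 2 * (b : ℤ) ^ 2}.Finite := finite_sol _
    have hS : ∀ d : ℕ, {p : ℤ × ℤ | p.1 ^ 2 + p.2 ^ 2 = 2 * (d : ℤ) ^ 2 ∧
        Int.gcd (Int.gcd p.1 p.2) (d : ℤ) = 1}.Finite := fun d =>
      (finite_sol (2 * (d : ℤ) ^ 2)).subset (fun p hp => hp.1)
    have gcd_mem : ∀ d ∈ b.divisors, ∀ a c : ℤ,
        Int.gcd (Int.gcd a c) (d : ℤ) = 1 →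
        Int.gcd (Int.gcd (((b / d : ℕ) : ℤ) * a) (((b / d : ℕ) : ℤ) * c)) (b : ℤ) = b / d := by
      intro d hd a c hgcd
      obtain ⟨hdvd, hb0⟩ := Nat.mem_divisors.mp hd
      have hbd : (b / d) * d = b := Nat.div_mul_cancel hdvd
      have := gcd_scale (b / d) d a c hgcd
      rwa [hbd] at this
    have key : hT.toFinset = b.divisors.biUnion (fun d => ((hS d).toFinset.image
        (fun p : ℤ × ℤ => (((b / d : ℕ) : ℤ) * p.1, ((b / d : ℕ) : ℤ) * p.2)))) := by
      ext ⟨x, y⟩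
      simp only [Set.Finite.mem_toFinset, Set.mem_setOf_eq, Finset.mem_biUnion,
        Finset.mem_image, Nat.mem_divisors, Prod.mk.injEq, Prod.exists]
      constructor
      · intro h
        set e : ℕ := Int.gcd (Int.gcd x y) (b : ℤ) with he
        have heb : e ∣ b := by
          have h0 : (e : ℤ) ∣ (b : ℤ) := Int.gcd_dvd_right _ _
          exact_mod_cast h0
        have hepos : 0 < e := by
          rcases Nat.eq_zero_or_pos e with h0 | h0
          · exfalso
            have h1 := Int.gcd_eq_zero_iff.mp h0
            have h2 : (b : ℤ) = 0 := h1.2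
            omega
          · exact h0
        refine ⟨b / e, ⟨Nat.div_dvd_of_dvd heb, hb.ne'⟩, ?_⟩
        have hbde : b / (b / e) = e := Nat.div_div_self heb hb.ne'
        have hax : (e : ℤ) ∣ x := (Int.gcd_dvd_left _ _).trans (Int.gcd_dvd_left _ _)
        have hay : (e : ℤ) ∣ y := (Int.gcd_dvd_left _ _).trans (Int.gcd_dvd_right _ _)
        obtain ⟨a, ha⟩ := hax
        obtain ⟨c, hc⟩ := hay
        have hbe : (b : ℤ) = (e : ℤ) * ((b / e : ℕ) : ℤ) := by
          have h0 : e * (b / e) = b := Nat.mul_div_cancel' heb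
          exact_mod_cast h0.symm
        have hene : (e : ℤ) ≠ 0 := by exact_mod_cast hepos.ne'
        have heq : a ^ 2 + c ^ 2 = 2 * ((b / e : ℕ) : ℤ) ^ 2 := by
          have h2 : (e : ℤ) ^ 2 * (a ^ 2 + c ^ 2) =
              (e : ℤ) ^ 2 * (2 * ((b / e : ℕ) : ℤ) ^ 2) := by
            calc (e : ℤ) ^ 2 * (a ^ 2 + c ^ 2) = x ^ 2 + y ^ 2 := by rw [ha, hc]; ring
              _ = 2 * (b : ℤ) ^ 2 := h
              _ = _ := by rw [hbe]; ring
          exact mul_left_cancel₀ (pow_ne_zero 2 hene) h2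
        have hg : Int.gcd (Int.gcd a c) ((b / e : ℕ) : ℤ) = 1 := by
          have h1 : Int.gcd (Int.gcd x y) (b : ℤ) =
              e * Int.gcd (Int.gcd a c) ((b / e : ℕ) : ℤ) := by
            have h2 : Int.gcd x y = e * Int.gcd a c := by
              rw [ha, hc, Int.gcd_mul_left]; simp
            have h3 : (b : ℕ) = e * (b / e) := (Nat.mul_div_cancel' heb).symm
            rw [h2]
            conv_lhs => rw [h3]
            rw [Int.gcd_natCast_natCast, Int.gcd_natCast_natCast, Nat.gcd_mul_left]
          rw [← he] at h1
          have h4 : e * Int.gcd (Int.gcd a c) ((b / e : ℕ) : ℤ) = e * 1 := by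
            rw [mul_one]; exact h1.symm
          exact Nat.eq_of_mul_eq_mul_left hepos h4
        exact ⟨a, c, ⟨heq, hg⟩, by rw [hbde, ha], by rw [hbde, hc]⟩
      · rintro ⟨d, ⟨hdvd, hb0⟩, a, c, ⟨heq, hg⟩, rfl, rfl⟩
        have hbd : ((b : ℤ)) = ((b / d : ℕ) : ℤ) * (d : ℤ) := by
          have h0 : (b / d) * d = b := Nat.div_mul_cancel hdvd
          exact_mod_cast h0.symm
        rw [hbd]
        linear_combination ((b / d : ℕ) : ℤ) ^ 2 * heq
    have hinj : ∀ d ∈ b.divisors, Function.Injective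
        (fun p : ℤ × ℤ => (((b / d : ℕ) : ℤ) * p.1, ((b / d : ℕ) : ℤ) * p.2)) := by
      intro d hd
      obtain ⟨hdvd, hb0⟩ := Nat.mem_divisors.mp hd
      have hpos : 0 < b / d := Nat.div_pos (Nat.le_of_dvd hb hdvd)
        (Nat.pos_of_dvd_of_pos hdvd hb)
      have hne : ((b / d : ℕ) : ℤ) ≠ 0 := by exact_mod_cast hpos.ne'
      rintro ⟨x1, y1⟩ ⟨x2, y2⟩ hpq
      simp only [Prod.mk.injEq] at hpq ⊢
      exact ⟨mul_left_cancel₀ hne hpq.1, mul_left_cancel₀ hne hpq.2⟩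
    have hdisj : ∀ d1 ∈ b.divisors, ∀ d2 ∈ b.divisors, d1 ≠ d2 →
        Disjoint ((hS d1).toFinset.image
            (fun p : ℤ × ℤ => (((b / d1 : ℕ) : ℤ) * p.1, ((b / d1 : ℕ) : ℤ) * p.2)))
          ((hS d2).toFinset.image
            (fun p : ℤ × ℤ => (((b / d2 : ℕ) : ℤ) * p.1, ((b / d2 : ℕ) : ℤ) * p.2))) := by
      intro d1 hd1 d2 hd2 hne
      rw [Finset.disjoint_left]
      rintro ⟨x, y⟩ hmem1 hmem2
      simp only [Finset.mem_image, Set.Finite.mem_toFinset, Set.mem_setOf_eq,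
        Prod.mk.injEq, Prod.exists] at hmem1 hmem2
      obtain ⟨a1, c1, ⟨_, hg1⟩, hx1, hy1⟩ := hmem1
      obtain ⟨a2, c2, ⟨_, hg2⟩, hx2, hy2⟩ := hmem2
      have e1 : Int.gcd (Int.gcd x y) (b : ℤ) = b / d1 := by
        rw [← hx1, ← hy1]; exact gcd_mem d1 hd1 a1 c1 hg1
      have e2 : Int.gcd (Int.gcd x y) (b : ℤ) = b / d2 := by
        rw [← hx2, ← hy2]; exact gcd_mem d2 hd2 a2 c2 hg2
      have hdd : b / d1 = b / d2 := e1.symm.trans e2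
      obtain ⟨h1, _⟩ := Nat.mem_divisors.mp hd1
      obtain ⟨h2, _⟩ := Nat.mem_divisors.mp hd2
      have hd12 : d1 = d2 := by
        have t1 : b / (b / d1) = d1 := Nat.div_div_self h1 hb.ne'
        have t2 : b / (b / d2) = d2 := Nat.div_div_self h2 hb.ne'
        rw [← t1, ← t2, hdd]
      exact hne hd12
    rw [Set.ncard_eq_toFinset_card _ hT, key, Finset.card_biUnion hdisj]
    refine Finset.sum_congr rfl fun d hd => ?_
    rw [Finset.card_image_of_injective _ (hinj d hd)]
    simp only [A]
    exact Set.ncard_eq_toFinset_card _ (hS d)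
  · -- Part 2
    have hinj : Function.Injective (fun q : ℤ × ℤ => (q.1 + q.2, q.1 - q.2)) := by
      rintro ⟨x1, y1⟩ ⟨x2, y2⟩ h
      simp only [Prod.mk.injEq] at h ⊢
      omega
    have himg : {p : ℤ × ℤ | p.1 ^ 2 + p.2 ^ 2 = 2 * (b : ℤ) ^ 2} =
        (fun q : ℤ × ℤ => (q.1 + q.2, q.1 - q.2)) ''
          {p : ℤ × ℤ | p.1 ^ 2 + p.2 ^ 2 = (b : ℤ) ^ 2} := by
      ext ⟨u, v⟩
      simp only [Set.mem_setOf_eq, Set.mem_image, Prod.mk.injEq, Prod.exists]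
      constructor
      · intro h
        have hpar : Even (u + v) := by
          have h1 : Even (u ^ 2 + v ^ 2) := ⟨(b : ℤ) ^ 2, by linarith⟩
          have h3 : Even u ↔ Even v := by
            simpa [Int.even_pow] using Int.even_add.mp h1
          exact Int.even_add.mpr h3
        obtain ⟨x, hx⟩ := hpar
        refine ⟨x, x - v, ?_, by omega, by omega⟩
        have hu2 : u = 2 * x - v := by omega
        rw [hu2] at h
        nlinarith [h]
      · rintro ⟨x, y, hxy, rfl, rfl⟩
        nlinarith [hxy]
    rw [himg, Set.ncard_image_of_injective _ hinj]
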